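/- For real a > -1 and Re(s) > -1, the function u(s,a,0) = ∫_0^1 x^s(1+x)^a dx satisfies u(s, a, 0) = 2^{a+1}/(s+1) − (1 + (a+1)/(s+1)) · u(s+1, a, 0). -/

import Mathlib

open MeasureTheory intervalIntegral

/-- `u(s,a,b) = ∫_0^1 x^s (1+x)^a (1-x)^b dx`. -/
noncomputable def uInt (s : ℂ) (a b : ℝ) : ℂ :=
  ∫ x in (0 : ℝ)..1, (x : ℂ) ^ s * (((1 + x) ^ a : ℝ) : ℂ) * (((1 - x) ^ b : ℝ) : ℂ)

/-- `u(s, a, 0) = 2^{a+1}/(s+1) − (1 + (a+1)/(s+1)) u(s+1, a, 0)`. -/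
theorem stmt12 (s : ℂ) (a : ℝ) (hs : -1 < s.re) (ha : -1 < a) :
    uInt s a 0 = (((2 : ℝ) ^ (a + 1) : ℝ) : ℂ) / (s + 1) -
      (1 + ((a : ℂ) + 1) / (s + 1)) * uInt (s + 1) a 0 := by
  have h1 : (s + 1) ≠ 0 := by
    intro h
    have := congrArg Complex.re h
    simp [Complex.add_re] at this
    linarith
  have hs' : s ≠ -1 := by
    intro h; rw [h] at hs; simp at hs
  -- continuity facts
  have hca : ContinuousOn (fun x : ℝ => (((1 + x) ^ a : ℝ) : ℂ)) (Set.uIcc (0:ℝ) 1) := by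
    apply Complex.continuous_ofReal.comp_continuousOn
    apply ContinuousOn.rpow_const
    · exact continuousOn_const.add continuousOn_id
    · intro x hx
      rw [Set.uIcc_of_le (by norm_num)] at hx
      exact Or.inl (by nlinarith [hx.1])
  have hca1 : ContinuousOn (fun x : ℝ => (((1 + x) ^ (a+1) : ℝ) : ℂ)) (Set.uIcc (0:ℝ) 1) := by
    apply Complex.continuous_ofReal.comp_continuousOn
    apply ContinuousOn.rpow_const
    · exact continuousOn_const.add continuousOn_id
    · intro x hx
      rw [Set.uIcc_of_le (by norm_num)] at hx
      exact Or.inl (by nlinarith [hx.1])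
  -- integrability facts
  have hint : ∀ t : ℂ, -1 < t.re → ∀ b : ℝ,
      IntervalIntegrable (fun x : ℝ => (x : ℂ) ^ t * (((1 + x) ^ b : ℝ) : ℂ)) volume 0 1 := by
    intro t ht b
    apply (intervalIntegral.intervalIntegrable_cpow' ht).mul_continuousOn
    apply Complex.continuous_ofReal.comp_continuousOn
    apply ContinuousOn.rpow_const
    · exact continuousOn_const.add continuousOn_id
    · intro x hx
      rw [Set.uIcc_of_le (by norm_num)] at hx
      exact Or.inl (by nlinarith [hx.1])
  have hs1 : -1 < (s+1).re := by simp [Complex.add_re]; linarith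
  have hintJ := hint s hs (a+1)
  have hintI := hint (s+1) hs1 a
  -- the FTC identity
  have key : ∫ x in (0:ℝ)..1,
      ((s+1) * ((x:ℂ) ^ s * (((1 + x) ^ (a+1) : ℝ) : ℂ))
        + ((a:ℂ)+1) * ((x:ℂ) ^ (s+1) * (((1 + x) ^ a : ℝ) : ℂ)))
      = (((2 : ℝ) ^ (a + 1) : ℝ) : ℂ) := by
    have := intervalIntegral.integral_eq_sub_of_hasDeriv_right_of_le (a := (0:ℝ)) (b := 1)
      (f := fun x : ℝ => (x:ℂ) ^ (s+1) * (((1 + x) ^ (a+1) : ℝ) : ℂ))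
      (f' := fun x : ℝ => (s+1) * ((x:ℂ) ^ s * (((1 + x) ^ (a+1) : ℝ) : ℂ))
        + ((a:ℂ)+1) * ((x:ℂ) ^ (s+1) * (((1 + x) ^ a : ℝ) : ℂ)))
      (by norm_num)
      ?_ ?_ ?_
    · rw [this]
      norm_num [Complex.zero_cpow h1, Complex.one_cpow]
    · -- continuity on Icc
      apply ContinuousOn.mul
      · exact (Complex.continuous_ofReal_cpow_const (by simp [Complex.add_re]; linarith)).continuousOn
      · rw [← Set.uIcc_of_le (by norm_num : (0:ℝ) ≤ 1)]; exact hca1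
    · -- derivative on Ioo
      intro x hx
      have hx0 : (0:ℝ) < x := hx.1
      have hd1 : HasDerivAt (fun y : ℝ => (y:ℂ) ^ (s+1)) ((s+1) * (x:ℂ) ^ s) x := by
        have h := (hasDerivAt_ofReal_cpow_const' (ne_of_gt hx0) hs').const_mul (s+1)
        have heq : (fun y : ℝ => (s+1) * ((y:ℂ) ^ (s+1) / (s+1))) = fun y : ℝ => (y:ℂ) ^ (s+1) := by
          funext y; field_simp
        rwa [heq] at h
      have hd2r : HasDerivAt (fun y : ℝ => (1 + y) ^ (a+1)) ((a+1) * (1+x) ^ a) x := by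
        have hb : (0:ℝ) < 1 + x := by linarith
        have h := (Real.hasDerivAt_rpow_const (p := a+1) (Or.inl (ne_of_gt hb))).comp x
          ((hasDerivAt_id x).const_add 1)
        simpa [Function.comp_def] using h
      have hd2 : HasDerivAt (fun y : ℝ => (((1 + y) ^ (a+1) : ℝ) : ℂ))
          ((((a+1) * (1+x) ^ a : ℝ)) : ℂ) x := hd2r.ofReal_comp
      have := hd1.mul hd2
      apply HasDerivAt.hasDerivWithinAt
      refine this.congr_deriv ?_
      push_cast
      ring
    · exact ((hintJ.const_mul _).add (hintI.const_mul _))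
  -- split the integral
  rw [intervalIntegral.integral_add (hintJ.const_mul _) (hintI.const_mul _),
    intervalIntegral.integral_const_mul, intervalIntegral.integral_const_mul] at key
  -- rewrite the first integrand: x^s (1+x)^{a+1} = x^s (1+x)^a + x^{s+1} (1+x)^a
  have hsplit : (∫ x in (0:ℝ)..1, (x:ℂ) ^ s * (((1 + x) ^ (a+1) : ℝ) : ℂ))
      = (∫ x in (0:ℝ)..1, (x:ℂ) ^ s * (((1 + x) ^ a : ℝ) : ℂ))
        + ∫ x in (0:ℝ)..1, (x:ℂ) ^ (s+1) * (((1 + x) ^ a : ℝ) : ℂ) := by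
    rw [← intervalIntegral.integral_add (hint s hs a) hintI]
    apply intervalIntegral.integral_congr
    intro x hx
    rw [Set.uIcc_of_le (by norm_num)] at hx
    have hb : (0:ℝ) < 1 + x := by nlinarith [hx.1]
    have hrw : ((1 + x : ℝ) ^ (a+1) : ℝ) = (1 + x) * (1 + x) ^ a := by
      rw [Real.rpow_add hb, Real.rpow_one]; ring
    simp only []
    rcases eq_or_lt_of_le hx.1 with h0 | h0
    · simp only [← h0]
      norm_num [Real.one_rpow, Complex.zero_cpow h1]
    · have hxc : (x:ℂ) ≠ 0 := by exact_mod_cast ne_of_gt h0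
      rw [hrw, Complex.cpow_add _ _ hxc, Complex.cpow_one]
      push_cast
      ring
  rw [hsplit] at key
  -- conclude
  have hu : ∀ t : ℂ, uInt t a 0 = ∫ x in (0:ℝ)..1, (x:ℂ) ^ t * (((1 + x) ^ a : ℝ) : ℂ) := by
    intro t
    unfold uInt
    apply intervalIntegral.integral_congr
    intro x hx
    rw [Set.uIcc_of_le (by norm_num)] at hx
    simp only []
    rw [Real.rpow_zero]
    simp
  rw [hu, hu]
  field_simp
  linear_combination key
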